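/- arXiv:2302.06479 — 4 statements merged into one kernel-verified Lean document; each statement's English description precedes it below -/
import Mathlib

section
/- Let V : ℝ_{≥0} × ℝ^n → ℝ be continuously differentiable and suppose there exist z : ℝ_{≥0} × ℝ^n → ℝ^n and c₁ ≥ 0 with ∇_x V(t,x) = E(t,x)^T z(t,x) and ∂_t V(t,x) + z(t,x)^T F(t,x) ≤ −c₁‖x‖², and constants c₂, c₃ > 0 with c₂‖x‖² ≤ V(t,x) ≤ c₃‖x‖². If for every (t₀, x₀) the initial value problem E(t,x)ẋ = F(t,x), x(t₀) = x₀ has a unique solution on [t₀, ∞), then the equilibrium point 0 is uniformly stable: for each ε > 0 there exists δ > 0 (e.g. δ = sqrt(c₂/c₃)·ε) such that for all t₀ ≥ 0 and ‖x₀‖ < δ, the solution satisfies ‖x(t)‖ < ε for all t ≥ t₀. -/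
open Matrix

theorem stmt4 {n : ℕ}
    (E : ℝ → (Fin n → ℝ) → Matrix (Fin n) (Fin n) ℝ)
    (F : ℝ → (Fin n → ℝ) → (Fin n → ℝ))
    (hEcont : Continuous (fun p : ℝ × (Fin n → ℝ) => E p.1 p.2))
    (hFcont : Continuous (fun p : ℝ × (Fin n → ℝ) => F p.1 p.2))
    (hEinv : ∀ t x, 0 ≤ t → IsUnit (E t x))
    (hF0 : ∀ t, 0 ≤ t → F t 0 = 0)
    (V Vt : ℝ → (Fin n → ℝ) → ℝ) (z : ℝ → (Fin n → ℝ) → Fin n → ℝ)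
    (hVC1 : ContDiff ℝ 1 (fun p : ℝ × (Fin n → ℝ) => V p.1 p.2))
    (c₁ : ℝ) (hc₁ : 0 ≤ c₁)
    (hgrad : ∀ t x h, 0 ≤ t →
      HasDerivAt (fun s : ℝ => V t (x + s • h)) ((((E t x)ᵀ) *ᵥ z t x) ⬝ᵥ h) 0)
    (hVt : ∀ t x, 0 ≤ t → HasDerivAt (fun s => V s x) (Vt t x) t)
    (hdec : ∀ t x, 0 ≤ t → Vt t x + z t x ⬝ᵥ F t x ≤ -c₁ * (x ⬝ᵥ x))
    (c₂ c₃ : ℝ) (hc₂ : 0 < c₂) (hc₃ : 0 < c₃)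
    (hlow : ∀ t x, 0 ≤ t → c₂ * (x ⬝ᵥ x) ≤ V t x)
    (hhigh : ∀ t x, 0 ≤ t → V t x ≤ c₃ * (x ⬝ᵥ x))
    (s : ℝ → (Fin n → ℝ) → ℝ → (Fin n → ℝ))
    (hinit : ∀ t₀, 0 ≤ t₀ → ∀ x₀, s t₀ x₀ t₀ = x₀)
    (hsol : ∀ t₀, 0 ≤ t₀ → ∀ x₀, ∀ t, t₀ ≤ t →
      ∃ d, HasDerivAt (s t₀ x₀) d t ∧ E t (s t₀ x₀ t) *ᵥ d = F t (s t₀ x₀ t))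
    (huniq : ∀ t₀, 0 ≤ t₀ → ∀ x₀, ∀ ys : ℝ → (Fin n → ℝ),
      (ys t₀ = x₀ ∧ ∀ t, t₀ ≤ t →
        ∃ d, HasDerivAt ys d t ∧ E t (ys t) *ᵥ d = F t (ys t)) →
      ∀ t, t₀ ≤ t → ys t = s t₀ x₀ t) :
    ∀ ε > (0 : ℝ), ∃ δ > (0 : ℝ), ∀ t₀, 0 ≤ t₀ → ∀ x₀,
      Real.sqrt (x₀ ⬝ᵥ x₀) < δ →
      ∀ t, t₀ ≤ t → Real.sqrt (s t₀ x₀ t ⬝ᵥ s t₀ x₀ t) < ε := by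
  intro ε hε
  have hδpos : 0 < Real.sqrt (c₂ / c₃) * ε := by positivity
  refine ⟨Real.sqrt (c₂ / c₃) * ε, hδpos, ?_⟩
  intro t₀ ht₀ x₀ hx₀ t ht
  set x : ℝ → (Fin n → ℝ) := s t₀ x₀ with hx
  have hW : Differentiable ℝ (fun p : ℝ × (Fin n → ℝ) => V p.1 p.2) :=
    hVC1.differentiable one_ne_zero
  have key : ∀ u, t₀ ≤ u →
      HasDerivAt (fun r => V r (x r)) (Vt u (x u) + z u (x u) ⬝ᵥ F u (x u)) u := by
    intro u hu
    have hu0 : (0:ℝ) ≤ u := ht₀.trans hu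
    obtain ⟨d, hd, hEd⟩ := hsol t₀ ht₀ x₀ u hu
    set L := fderiv ℝ (fun p : ℝ × (Fin n → ℝ) => V p.1 p.2) (u, x u) with hL
    have hFD : HasFDerivAt (fun p : ℝ × (Fin n → ℝ) => V p.1 p.2) L (u, x u) :=
      (hW (u, x u)).hasFDerivAt
    have h1 : L (1, 0) = Vt u (x u) := by
      have hi : HasDerivAt (fun r : ℝ => ((r, x u) : ℝ × (Fin n → ℝ)))
          ((1 : ℝ), (0 : Fin n → ℝ)) u := (hasDerivAt_id u).prodMk (hasDerivAt_const u _)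
      have hcomp : HasDerivAt (fun r : ℝ => V r (x u)) (L (1, 0)) u :=
        by have := hFD.comp_hasDerivAt u hi; exact this
      exact hcomp.unique (hVt u (x u) hu0)
    have h2 : L (0, d) = ((E u (x u))ᵀ *ᵥ z u (x u)) ⬝ᵥ d := by
      have hi : HasDerivAt (fun r : ℝ => ((u, x u + r • d) : ℝ × (Fin n → ℝ)))
          ((0 : ℝ), d) 0 := by
        refine (hasDerivAt_const 0 u).prodMk ?_
        have := ((hasDerivAt_id (0:ℝ)).smul_const d).const_add (x u)
        simpa using this
      have hpt : HasFDerivAt (fun p : ℝ × (Fin n → ℝ) => V p.1 p.2) L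
          ((fun r : ℝ => ((u, x u + r • d) : ℝ × (Fin n → ℝ))) 0) := by
        simpa using hFD
      have hcomp : HasDerivAt (fun r : ℝ => V u (x u + r • d)) (L (0, d)) 0 :=
        by have := hpt.comp_hasDerivAt 0 hi; exact this
      exact hcomp.unique (hgrad u (x u) d hu0)
    have hi2 : HasDerivAt (fun r : ℝ => ((r, x r) : ℝ × (Fin n → ℝ)))
        ((1 : ℝ), d) u := (hasDerivAt_id u).prodMk hd
    have hcomp : HasDerivAt (fun r : ℝ => V r (x r)) (L (1, d)) u :=
      by have := hFD.comp_hasDerivAt u hi2; exact this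
    have hLval : L (1, d) = Vt u (x u) + z u (x u) ⬝ᵥ F u (x u) := by
      have hsplit : ((1 : ℝ), d) = ((1 : ℝ), (0 : Fin n → ℝ)) + ((0 : ℝ), d) := by
        simp
      rw [hsplit, L.map_add, h1, h2]
      congr 1
      rw [Matrix.mulVec_transpose, ← Matrix.dotProduct_mulVec, hEd]
    rwa [hLval] at hcomp
  have hdotnn : ∀ y : Fin n → ℝ, (0:ℝ) ≤ y ⬝ᵥ y := fun y =>
    Finset.sum_nonneg fun i _ => mul_self_nonneg _
  have hanti : AntitoneOn (fun r => V r (x r)) (Set.Ici t₀) := by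
    apply antitoneOn_of_deriv_nonpos (convex_Ici t₀)
    · intro u hu
      exact (key u hu).continuousAt.continuousWithinAt
    · intro u hu
      rw [interior_Ici] at hu
      exact ((key u hu.le).differentiableAt).differentiableWithinAt
    · intro u hu
      rw [interior_Ici] at hu
      rw [(key u hu.le).deriv]
      have := hdec u (x u) (ht₀.trans hu.le)
      have : Vt u (x u) + z u (x u) ⬝ᵥ F u (x u) ≤ -c₁ * (x u ⬝ᵥ x u) := this
      nlinarith [hdotnn (x u)]
  have hmono : V t (x t) ≤ V t₀ (x t₀) :=
    hanti Set.self_mem_Ici ht ht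
  have hxt0 : x t₀ = x₀ := hinit t₀ ht₀ x₀
  have ht0 : (0:ℝ) ≤ t := ht₀.trans ht
  have h1 : c₂ * (x t ⬝ᵥ x t) ≤ V t (x t) := hlow t (x t) ht0
  have h2 : V t₀ (x t₀) ≤ c₃ * (x₀ ⬝ᵥ x₀) := by
    rw [hxt0]; exact hhigh t₀ x₀ ht₀
  have hx₀sq : x₀ ⬝ᵥ x₀ < (c₂ / c₃) * ε ^ 2 := by
    have := (Real.sqrt_lt' hδpos).mp hx₀
    calc x₀ ⬝ᵥ x₀ < (Real.sqrt (c₂ / c₃) * ε) ^ 2 := this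
      _ = Real.sqrt (c₂ / c₃) ^ 2 * ε ^ 2 := by ring
      _ = (c₂ / c₃) * ε ^ 2 := by
          rw [Real.sq_sqrt (by positivity : (0:ℝ) ≤ c₂ / c₃)]
  have hfin : x t ⬝ᵥ x t < ε ^ 2 := by
    have : c₂ * (x t ⬝ᵥ x t) < c₂ * ε ^ 2 := by
      calc c₂ * (x t ⬝ᵥ x t) ≤ c₃ * (x₀ ⬝ᵥ x₀) := by linarith
        _ < c₃ * ((c₂ / c₃) * ε ^ 2) := by
            exact mul_lt_mul_of_pos_left hx₀sq hc₃
        _ = c₂ * ε ^ 2 := by field_simp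
    exact lt_of_mul_lt_mul_left this hc₂.le
  exact (Real.sqrt_lt' hε).mpr hfin
end

section
/- Under the hypotheses of Lyapunov's theorem for E(t,x)ẋ = F(t,x) with globally quadratic Lyapunov function V, the function t ↦ V(t, x(t)) is non-increasing along every solution, and consequently ‖x(t)‖² ≤ (c₃/c₂)‖x(t₀)‖² for all t ≥ t₀. -/
open Matrix

theorem stmt5 {n : ℕ} (t₀ : ℝ) (ht₀ : 0 ≤ t₀)
    (E : ℝ → (Fin n → ℝ) → Matrix (Fin n) (Fin n) ℝ)
    (F : ℝ → (Fin n → ℝ) → (Fin n → ℝ))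
    (hEcont : Continuous (fun p : ℝ × (Fin n → ℝ) => E p.1 p.2))
    (hFcont : Continuous (fun p : ℝ × (Fin n → ℝ) => F p.1 p.2))
    (hEinv : ∀ t x, 0 ≤ t → IsUnit (E t x))
    (x x' : ℝ → Fin n → ℝ)
    (hsol : ∀ t, t₀ ≤ t → HasDerivAt x (x' t) t ∧ E t (x t) *ᵥ x' t = F t (x t))
    (V Vt : ℝ → (Fin n → ℝ) → ℝ) (z : ℝ → (Fin n → ℝ) → Fin n → ℝ)
    (hVC1 : ContDiff ℝ 1 (fun p : ℝ × (Fin n → ℝ) => V p.1 p.2))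
    (hgrad : ∀ t ξ h, 0 ≤ t →
      HasDerivAt (fun s : ℝ => V t (ξ + s • h)) ((((E t ξ)ᵀ) *ᵥ z t ξ) ⬝ᵥ h) 0)
    (hVt : ∀ t ξ, 0 ≤ t → HasDerivAt (fun s => V s ξ) (Vt t ξ) t)
    (hdec : ∀ t ξ, 0 ≤ t → Vt t ξ + z t ξ ⬝ᵥ F t ξ ≤ 0)
    (c₂ c₃ : ℝ) (hc₂ : 0 < c₂) (hc₃ : 0 < c₃)
    (hlow : ∀ t ξ, 0 ≤ t → c₂ * (ξ ⬝ᵥ ξ) ≤ V t ξ)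
    (hhigh : ∀ t ξ, 0 ≤ t → V t ξ ≤ c₃ * (ξ ⬝ᵥ ξ)) :
    (∀ s t : ℝ, t₀ ≤ s → s ≤ t → V t (x t) ≤ V s (x s)) ∧
      (∀ t, t₀ ≤ t → x t ⬝ᵥ x t ≤ (c₃ / c₂) * (x t₀ ⬝ᵥ x t₀)) := by
  have key : ∀ t, t₀ ≤ t →
      HasDerivAt (fun s => V s (x s))
        (Vt t (x t) + (((E t (x t))ᵀ) *ᵥ z t (x t)) ⬝ᵥ x' t) t := by
    intro t ht
    have ht0 : (0:ℝ) ≤ t := le_trans ht₀ ht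
    have hdx : HasDerivAt x (x' t) t := (hsol t ht).1
    set g := fun p : ℝ × (Fin n → ℝ) => V p.1 p.2 with hgdef
    set L := fderiv ℝ g (t, x t) with hL
    have hg : HasFDerivAt g L (t, x t) :=
      (hVC1.differentiable one_ne_zero (t, x t)).hasFDerivAt
    have hpair : HasDerivAt (fun s => (s, x s)) ((1:ℝ), x' t) t :=
      HasDerivAt.prodMk (hasDerivAt_id t) hdx
    have hcomp : HasDerivAt (fun s => V s (x s)) (L (1, x' t)) t := by
      exact hg.comp_hasDerivAt t hpair
    have hsplit : L (1, x' t) = L (1, 0) + L (0, x' t) := by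
      rw [← map_add]
      norm_num
    have h1 : HasDerivAt (fun s => V s (x t)) (L (1, 0)) t := by
      have hpair2 : HasDerivAt (fun s : ℝ => (s, x t)) ((1:ℝ), (0 : Fin n → ℝ)) t :=
        HasDerivAt.prodMk (hasDerivAt_id t) (hasDerivAt_const t (x t))
      exact hg.comp_hasDerivAt t hpair2
    have e1 : L (1, (0 : Fin n → ℝ)) = Vt t (x t) := h1.unique (hVt t (x t) ht0)
    have h2 : HasDerivAt (fun s : ℝ => V t (x t + s • x' t)) (L (0, x' t)) 0 := by
      have hpath : HasDerivAt (fun s : ℝ => x t + s • x' t) (x' t) 0 := by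
        simpa using ((hasDerivAt_id (0:ℝ)).smul_const (x' t)).const_add (x t)
      have hpair3 : HasDerivAt (fun s : ℝ => ((t : ℝ), x t + s • x' t))
          ((0:ℝ), x' t) 0 := HasDerivAt.prodMk (hasDerivAt_const (0:ℝ) t) hpath
      have hg' : HasFDerivAt g L ((fun s : ℝ => ((t : ℝ), x t + s • x' t)) 0) := by
        simpa using hg
      exact hg'.comp_hasDerivAt 0 hpair3
    have e2 : L (0, x' t) = (((E t (x t))ᵀ) *ᵥ z t (x t)) ⬝ᵥ x' t :=
      h2.unique (hgrad t (x t) (x' t) ht0)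
    rw [hsplit, e1, e2] at hcomp
    exact hcomp
  have hneg : ∀ t, t₀ ≤ t →
      Vt t (x t) + (((E t (x t))ᵀ) *ᵥ z t (x t)) ⬝ᵥ x' t ≤ 0 := by
    intro t ht
    have ht0 : (0:ℝ) ≤ t := le_trans ht₀ ht
    have hEq : (((E t (x t))ᵀ) *ᵥ z t (x t)) ⬝ᵥ x' t
        = z t (x t) ⬝ᵥ F t (x t) := by
      rw [Matrix.mulVec_transpose, ← (hsol t ht).2, Matrix.dotProduct_mulVec]
    rw [hEq]
    exact hdec t (x t) ht0
  have hanti : AntitoneOn (fun t => V t (x t)) (Set.Ici t₀) := by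
    apply antitoneOn_of_deriv_nonpos (convex_Ici t₀)
    · exact fun t ht => ((key t ht).differentiableAt.continuousAt).continuousWithinAt
    · intro t ht
      rw [interior_Ici] at ht
      exact (key t ht.le).differentiableAt.differentiableWithinAt
    · intro t ht
      rw [interior_Ici] at ht
      rw [(key t ht.le).deriv]
      exact hneg t ht.le
  constructor
  · intro s t hs hst
    exact hanti (Set.mem_Ici.mpr hs) (Set.mem_Ici.mpr (hs.trans hst)) hst
  · intro t ht
    have h1 : c₂ * (x t ⬝ᵥ x t) ≤ V t (x t) := hlow t (x t) (le_trans ht₀ ht)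
    have h2 : V t (x t) ≤ V t₀ (x t₀) :=
      hanti (Set.mem_Ici.mpr le_rfl) (Set.mem_Ici.mpr ht) ht
    have h3 : V t₀ (x t₀) ≤ c₃ * (x t₀ ⬝ᵥ x t₀) := hhigh t₀ (x t₀) ht₀
    rw [div_mul_eq_mul_div, le_div_iff₀ hc₂]
    nlinarith
end

section
/- Consider the reduced matrices Ẽ(t) = V_r(t)^T Q(t)^T E(t) V_r(t) and K̃(t) = V_r(t)^T Q(t)^T (K(t) V_r(t) + E(t) V̇_r(t)) where (d/dt)(Q^T E) = Q^T K + K^T Q pointwise. Then (d/dt)(Ẽ(t)) = K̃(t) + K̃(t)^T for all t. -/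
open Matrix

lemma stmt9_ent {n r : ℕ} (A : Matrix (Fin n) (Fin r) ℝ)
    (B : Matrix (Fin n) (Fin n) ℝ) (C : Matrix (Fin n) (Fin r) ℝ)
    (i j : Fin r) :
    (Aᵀ * (B * C)) i j = ∑ k, ∑ l, A k i * (B k l * C l j) := by
  simp only [Matrix.mul_apply, Matrix.transpose_apply, Finset.mul_sum]

theorem stmt9 {n r : ℕ}
    (E Q K : ℝ → Matrix (Fin n) (Fin n) ℝ)
    (Vr Vr' : ℝ → Matrix (Fin n) (Fin r) ℝ)
    (hsym : ∀ t, (E t)ᵀ * Q t = (Q t)ᵀ * E t)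
    (hQE : ∀ t i j, HasDerivAt (fun s => ((Q s)ᵀ * E s) i j)
      (((Q t)ᵀ * K t + (K t)ᵀ * Q t) i j) t)
    (hVr : ∀ t i j, HasDerivAt (fun s => Vr s i j) (Vr' t i j) t) :
    ∀ (t : ℝ) (i j : Fin r),
      HasDerivAt (fun s => ((Vr s)ᵀ * (Q s)ᵀ * E s * Vr s) i j)
        (((Vr t)ᵀ * (Q t)ᵀ * (K t * Vr t + E t * Vr' t) +
            ((Vr t)ᵀ * (Q t)ᵀ * (K t * Vr t + E t * Vr' t))ᵀ) i j) t := by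
  intro t i j
  have hMsym : ∀ k l, ((Q t)ᵀ * E t) k l = ((Q t)ᵀ * E t) l k := by
    intro k l
    conv_lhs => rw [← hsym t]
    simp [Matrix.mul_apply, Matrix.transpose_apply, mul_comm]
  have key : ∀ s, ((Vr s)ᵀ * (Q s)ᵀ * E s * Vr s) i j
      = ∑ k, ∑ l, Vr s k i * (((Q s)ᵀ * E s) k l * Vr s l j) := by
    intro s
    rw [Matrix.mul_assoc, Matrix.mul_assoc, ← Matrix.mul_assoc (Q s)ᵀ]
    simp only [Matrix.mul_apply, Matrix.transpose_apply, Finset.mul_sum]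
  have hd : HasDerivAt
      (fun s => ∑ k, ∑ l, Vr s k i * (((Q s)ᵀ * E s) k l * Vr s l j))
      (∑ k, ∑ l, (Vr' t k i * (((Q t)ᵀ * E t) k l * Vr t l j)
        + Vr t k i * ((((Q t)ᵀ * K t + (K t)ᵀ * Q t) k l) * Vr t l j
           + ((Q t)ᵀ * E t) k l * Vr' t l j))) t := by
    refine HasDerivAt.fun_sum fun k _ => HasDerivAt.fun_sum fun l _ => ?_
    exact (hVr t k i).mul ((hQE t k l).mul (hVr t l j))
  have heq : (∑ k, ∑ l, (Vr' t k i * (((Q t)ᵀ * E t) k l * Vr t l j)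
        + Vr t k i * ((((Q t)ᵀ * K t + (K t)ᵀ * Q t) k l) * Vr t l j
           + ((Q t)ᵀ * E t) k l * Vr' t l j)))
      = (((Vr t)ᵀ * (Q t)ᵀ * (K t * Vr t + E t * Vr' t) +
            ((Vr t)ᵀ * (Q t)ᵀ * (K t * Vr t + E t * Vr' t))ᵀ) i j) := by
    have hX : (Vr t)ᵀ * (Q t)ᵀ * (K t * Vr t + E t * Vr' t)
        = (Vr t)ᵀ * (((Q t)ᵀ * K t) * Vr t)
          + (Vr t)ᵀ * (((Q t)ᵀ * E t) * Vr' t) := by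
      simp only [Matrix.mul_add, Matrix.mul_assoc]
    have swap1 : (∑ k, ∑ l, Vr' t k i * (((Q t)ᵀ * E t) k l * Vr t l j))
        = ∑ k, ∑ l, Vr t k j * (((Q t)ᵀ * E t) k l * Vr' t l i) := by
      rw [Finset.sum_comm]
      refine Finset.sum_congr rfl fun k _ => Finset.sum_congr rfl fun l _ => ?_
      rw [hMsym l k]; ring
    have swap2 : (∑ k, ∑ l, Vr t k i * (((K t)ᵀ * Q t) k l * Vr t l j))
        = ∑ k, ∑ l, Vr t k j * (((Q t)ᵀ * K t) k l * Vr t l i) := by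
      rw [Finset.sum_comm]
      refine Finset.sum_congr rfl fun k _ => Finset.sum_congr rfl fun l _ => ?_
      have : ((K t)ᵀ * Q t) l k = ((Q t)ᵀ * K t) k l := by
        simp [Matrix.mul_apply, Matrix.transpose_apply, mul_comm]
      rw [this]; ring
    rw [hX, Matrix.add_apply, Matrix.transpose_apply, Matrix.add_apply,
      Matrix.add_apply, stmt9_ent, stmt9_ent, stmt9_ent, stmt9_ent]
    simp only [Matrix.add_apply, mul_add, add_mul, Finset.sum_add_distrib]
    rw [swap1, swap2]
    ring
  rw [← heq]
  exact hd.congr_of_eventuallyEq (Filter.Eventually.of_forall fun s => key s)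
end

section
/- Let α, β, γ, ζ > 0, η = α/(4γζ), and let V = diag(v(u₁,β),…,v(u_{N+1},β)) with v(T,β) = exp(−β/T) for T > 0 and 0 otherwise. Then the block matrix R₂ = [[αγ I, −(α/(2η)) V], [−(α/(2η)) V, (ζ/η) V]] ∈ ℝ^{2(N+1), 2(N+1)} is symmetric and positive semi-definite. -/
open Matrix

theorem stmt13 {N : ℕ} (α β γ ζ : ℝ)
    (hα : 0 < α) (hβ : 0 < β) (hγ : 0 < γ) (hζ : 0 < ζ)
    (u : Fin (N + 1) → ℝ)
    (v : ℝ → ℝ → ℝ)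
    (hv : ∀ T b : ℝ, v T b = if 0 < T then Real.exp (-b / T) else 0) :
    (Matrix.fromBlocks
      ((α * γ) • (1 : Matrix (Fin (N + 1)) (Fin (N + 1)) ℝ))
      ((-(α / (2 * (α / (4 * γ * ζ))))) • Matrix.diagonal (fun i => v (u i) β))
      ((-(α / (2 * (α / (4 * γ * ζ))))) • Matrix.diagonal (fun i => v (u i) β))
      ((ζ / (α / (4 * γ * ζ))) • Matrix.diagonal (fun i => v (u i) β))).PosSemidef := by
  have hw0 : ∀ i, 0 ≤ v (u i) β := by
    intro i; rw [hv]; split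
    · positivity
    · exact le_rfl
  have hw1 : ∀ i, v (u i) β ≤ 1 := by
    intro i; rw [hv]; split
    · rename_i h
      rw [Real.exp_le_one_iff, neg_div, neg_nonpos]
      positivity
    · norm_num
  have e1 : -(α / (2 * (α / (4 * γ * ζ)))) = -(2 * γ * ζ) := by field_simp; ring
  have e2 : ζ / (α / (4 * γ * ζ)) = 4 * γ * ζ ^ 2 / α := by field_simp
  rw [e1, e2]
  rw [posSemidef_iff_dotProduct_mulVec]
  constructor
  · show _ᴴ = _
    ext i j
    cases i <;> cases j <;>
      simp [Matrix.conjTranspose_apply, Matrix.one_apply, Matrix.diagonal_apply, eq_comm] <;>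
      split <;> simp_all
  · intro x
    rw [← Sum.elim_comp_inl_inr x]
    simp only [Function.star_sumElim, fromBlocks_mulVec, star_trivial]
    rw [sumElim_dotProduct_sumElim]
    simp only [smul_mulVec, mulVec_diagonal, one_mulVec]
    simp only [Sum.elim_comp_inl, Sum.elim_comp_inr, dotProduct, Pi.add_apply, Pi.smul_apply,
      mulVec_diagonal, smul_eq_mul, Function.comp_apply]
    rw [← Finset.sum_add_distrib]
    apply Finset.sum_nonneg
    intro i _
    have h := hw0 i
    have h1 := hw1 i
    set p := x (Sum.inl i)
    set q := x (Sum.inr i)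
    set w := v (u i) β
    have key : p * (α * γ * p + -(2 * γ * ζ) * (w * q)) +
        q * (-(2 * γ * ζ) * (w * p) + 4 * γ * ζ ^ 2 / α * (w * q)) =
        γ / α * (w * (α * p - 2 * ζ * q) ^ 2 + α ^ 2 * (1 - w) * p ^ 2) := by
      field_simp
      ring
    rw [key]
    have hga : 0 ≤ γ / α := by positivity
    apply mul_nonneg hga
    apply add_nonneg (mul_nonneg h (sq_nonneg _))
    apply mul_nonneg (mul_nonneg (sq_nonneg α) (by linarith)) (sq_nonneg p)
end
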